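/- In any BDRG A, the following are equivalent: (1) a → b ≤ r → (a → b) holds for all a, b, r ∈ A (the axiom (RT)); (2) a • (r • s) ≤ a • s holds for all a, r, s ∈ A (the rule (rt)). -/
import Mathlib


/-- A bounded distributive lattice-ordered residuated groupoid (BDRG):
a bounded distributive lattice with operations `prod` (•), `imp` (→), `limp` (←)
satisfying the residuation law: a • b ≤ c ↔ b ≤ a → c ↔ a ≤ c ← b. -/
structure BDRG (A : Type*) [DistribLattice A] [BoundedOrder A] where
  prod : A → A → A
  imp : A → A → A
  limp : A → A → A
  res_imp : ∀ a b c : A, prod a b ≤ c ↔ b ≤ imp a c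
  res_limp : ∀ a b c : A, prod a b ≤ c ↔ a ≤ limp c b

theorem corr_RT_rt {A : Type*} [DistribLattice A] [BoundedOrder A] (G : BDRG A) :
    (∀ a b r : A, G.imp a b ≤ G.imp r (G.imp a b)) ↔
    (∀ a r s : A, G.prod a (G.prod r s) ≤ G.prod a s) := by
  constructor
  · intro h a r s
    rw [G.res_imp, G.res_imp]
    calc s ≤ G.imp a (G.prod a s) := (G.res_imp a s (G.prod a s)).mp le_rfl
      _ ≤ G.imp r (G.imp a (G.prod a s)) := h a (G.prod a s) r
  · intro h a b r
    rw [← G.res_imp, ← G.res_imp]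
    exact le_trans (h a r (G.imp a b)) ((G.res_imp a (G.imp a b) b).mpr le_rfl)
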